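/- (Ultramodular implies classical IVPM) Let (ℓ, r) be an ultramodular interval-valued map on [0,1]. Then for every measurable space Ω and every probability measure μ on Ω, the assignment of intervals E ↦ [ℓ (μ E), r (μ E)] to measurable sets E satisfies: ℓ (μ ∅) = r (μ ∅) = 0; ℓ (μ Ω) = r (μ Ω) = 1; for every measurable E, ℓ (μ Eᶜ) = 1 − r (μ E) and r (μ Eᶜ) = 1 − ℓ (μ E); and for all measurable E, F: ℓ (μ E) + ℓ (μ F) ≤ ℓ (μ (E ∪ F)) + ℓ (μ (E ∩ F)) and r (μ (E ∪ F)) + r (μ (E ∩ F)) ≤ r (μ E) + r (μ F). (Here μ E denotes the real-valued measure of E.) -/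
import Mathlib


open Matrix
open scoped ComplexOrder

/-- A projector on `ℂ^d`: an idempotent, self-adjoint matrix. -/
def IsProjector {d : ℕ} (P : Matrix (Fin d) (Fin d) ℂ) : Prop :=
  P * P = P ∧ Pᴴ = P

/-- A quantum interval-valued probability measure (QIVPM) on `ℂ^d`,
given by the pair of interval-endpoint functions `L ≤ R`. -/
def IsQIVPM {d : ℕ} (L R : Matrix (Fin d) (Fin d) ℂ → ℝ) : Prop :=
  (∀ P, IsProjector P → 0 ≤ L P ∧ L P ≤ R P ∧ R P ≤ 1) ∧
  (L 0 = 0 ∧ R 0 = 0) ∧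
  (L 1 = 1 ∧ R 1 = 1) ∧
  (∀ P, IsProjector P → L (1 - P) = 1 - R P ∧ R (1 - P) = 1 - L P) ∧
  (∀ P₀ P₁, IsProjector P₀ → IsProjector P₁ → P₀ * P₁ = P₁ * P₀ →
    L P₀ + L P₁ ≤ L (P₀ + P₁ - P₀ * P₁) + L (P₀ * P₁) ∧
    R (P₀ + P₁ - P₀ * P₁) + R (P₀ * P₁) ≤ R P₀ + R P₁)

/-- A QIVPM is `δ`-deterministic if every projector's interval lies in `[0,δ]` or `[1-δ,1]`. -/
def IsDeltaDet {d : ℕ} (δ : ℝ) (L R : Matrix (Fin d) (Fin d) ℂ → ℝ) : Prop :=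
  ∀ P, IsProjector P → R P ≤ δ ∨ 1 - δ ≤ L P

/-- A QIVPM is `0`-deterministic if every projector is assigned `[0,0]` or `[1,1]`. -/
def IsZeroDet {d : ℕ} (L R : Matrix (Fin d) (Fin d) ℂ → ℝ) : Prop :=
  ∀ P, IsProjector P → (L P = 0 ∧ R P = 0) ∨ (L P = 1 ∧ R P = 1)

/-- A state (density matrix) on `ℂ^d`. -/
def IsState {d : ℕ} (ρ : Matrix (Fin d) (Fin d) ℂ) : Prop :=
  ρ.PosSemidef ∧ ρ.trace = 1

/-- An interval-valued map on `[0,1]`. -/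
def IsIntervalValuedMap (l r : ℝ → ℝ) : Prop :=
  ∀ x ∈ Set.Icc (0:ℝ) 1, 0 ≤ l x ∧ l x ≤ r x ∧ r x ≤ 1

/-- An ultramodular interval-valued map on `[0,1]`. -/
def IsUltramodular (l r : ℝ → ℝ) : Prop :=
  IsIntervalValuedMap l r ∧
  (l 0 = 0 ∧ r 0 = 0) ∧
  (l 1 = 1 ∧ r 1 = 1) ∧
  (∀ x ∈ Set.Icc (0:ℝ) 1, l (1 - x) = 1 - r x ∧ r (1 - x) = 1 - l x) ∧
  (∀ x₀ x₁ x₂ : ℝ, 0 ≤ x₀ → 0 ≤ x₁ → 0 ≤ x₂ → x₀ + x₁ + x₂ ≤ 1 →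
    l (x₀ + x₂) + l (x₁ + x₂) ≤ l (x₀ + x₁ + x₂) + l x₂ ∧
    r (x₀ + x₁ + x₂) + r x₂ ≤ r (x₀ + x₂) + r (x₁ + x₂))

open MeasureTheory in
theorem ultramodular_comp_prob_is_IVPM (l r : ℝ → ℝ) (hu : IsUltramodular l r)
    {Ω : Type*} [MeasurableSpace Ω] (μ : ProbabilityMeasure Ω) :
    (l (μ (∅ : Set Ω) : ℝ) = 0 ∧ r (μ (∅ : Set Ω) : ℝ) = 0) ∧
    (l (μ (Set.univ : Set Ω) : ℝ) = 1 ∧ r (μ (Set.univ : Set Ω) : ℝ) = 1) ∧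
    (∀ E : Set Ω, MeasurableSet E →
      l (μ Eᶜ : ℝ) = 1 - r (μ E : ℝ) ∧ r (μ Eᶜ : ℝ) = 1 - l (μ E : ℝ)) ∧
    (∀ E F : Set Ω, MeasurableSet E → MeasurableSet F →
      l (μ E : ℝ) + l (μ F : ℝ) ≤ l (μ (E ∪ F) : ℝ) + l (μ (E ∩ F) : ℝ) ∧
      r (μ (E ∪ F) : ℝ) + r (μ (E ∩ F) : ℝ) ≤ r (μ E : ℝ) + r (μ F : ℝ)) := by
  obtain ⟨hiv, ⟨hl0, hr0⟩, ⟨hl1, hr1⟩, hcomp, humod⟩ := hu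
  have hmem : ∀ E : Set Ω, (μ E : ℝ) ∈ Set.Icc (0:ℝ) 1 := fun E =>
    ⟨ENNReal.toReal_nonneg, by
      show (μ.toMeasure E).toReal ≤ 1
      exact ENNReal.toReal_le_of_le_ofReal zero_le_one (by simpa using prob_le_one)⟩
  have hcpl : ∀ E : Set Ω, MeasurableSet E → (μ Eᶜ : ℝ) = 1 - (μ E : ℝ) := by
    intro E hE
    show (μ.toMeasure Eᶜ).toReal = 1 - (μ.toMeasure E).toReal
    rw [MeasureTheory.prob_compl_eq_one_sub hE,
        ENNReal.toReal_sub_of_le prob_le_one (by simp)]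
    simp
  have he : (μ (∅ : Set Ω) : ℝ) = 0 := by simp
  have hv : (μ (Set.univ : Set Ω) : ℝ) = 1 := by simp
  refine ⟨by rw [he]; exact ⟨hl0, hr0⟩, by rw [hv]; exact ⟨hl1, hr1⟩, ?_, ?_⟩
  · intro E hE
    rw [hcpl E hE]
    exact hcomp _ (hmem E)
  · intro E F hE hF
    set a : ℝ := (μ (E \ F) : ℝ) with ha
    set b : ℝ := (μ (F \ E) : ℝ) with hb
    set c : ℝ := (μ (E ∩ F) : ℝ) with hc
    have haE : a + c = (μ E : ℝ) := by
      show (μ.toMeasure (E \ F)).toReal + (μ.toMeasure (E ∩ F)).toReal = (μ.toMeasure E).toReal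
      rw [← ENNReal.toReal_add (measure_ne_top _ _) (measure_ne_top _ _),
          measure_diff_add_inter _ hF]
    have hbF : b + c = (μ F : ℝ) := by
      show (μ.toMeasure (F \ E)).toReal + (μ.toMeasure (E ∩ F)).toReal = (μ.toMeasure F).toReal
      rw [← ENNReal.toReal_add (measure_ne_top _ _) (measure_ne_top _ _),
          Set.inter_comm, measure_diff_add_inter _ hE]
    have hsum : (μ (E ∪ F) : ℝ) + c = (μ E : ℝ) + (μ F : ℝ) := by
      show (μ.toMeasure (E ∪ F)).toReal + (μ.toMeasure (E ∩ F)).toReal =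
        (μ.toMeasure E).toReal + (μ.toMeasure F).toReal
      rw [← ENNReal.toReal_add (measure_ne_top _ _) (measure_ne_top _ _),
          ← ENNReal.toReal_add (measure_ne_top _ _) (measure_ne_top _ _),
          measure_union_add_inter _ hF]
    have hU : (μ (E ∪ F) : ℝ) = a + b + c := by linarith
    have hle : a + b + c ≤ 1 := hU ▸ (hmem (E ∪ F)).2
    have := humod a b c (hmem _).1 (hmem _).1 (hmem _).1 hle
    rw [haE, hbF, ← hU] at this
    exact this
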